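/- arXiv:2006.05607 — 8 statements merged into one kernel-verified Lean document; each statement's English description precedes it below -/
import Mathlib

section
/- Let k ≥ 2 be an integer and Q = T[H_1, ..., H_t] a digraph composition. Then Q has a k-king if and only if T has a k-king u_i for some i ∈ [t] and at least one of the following holds: (i) H_i has a k-king; (ii) |V(H_i)| ≥ 2 and u_i belongs to a directed cycle of T of length at most k. -/
/-- There is a directed walk (equivalently, path) of length at most `k` from `x` to `y`. -/
def KReach {V : Type*} (A : V → V → Prop) (k : ℕ) (x y : V) : Prop :=
  ∃ n : ℕ, n ≤ k ∧ ∃ f : ℕ → V, f 0 = x ∧ f n = y ∧ ∀ i < n, A (f i) (f (i + 1))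

/-- `x` is a `k`-king: it reaches every vertex by a path of length at most `k`. -/
def IsKKing {V : Type*} (A : V → V → Prop) (k : ℕ) (x : V) : Prop :=
  ∀ y : V, KReach A k x y

/-- A strict `k`-king: a `k`-king with some vertex at distance exactly `k`. -/
def IsStrictKKing {V : Type*} (A : V → V → Prop) (k : ℕ) (x : V) : Prop :=
  IsKKing A k x ∧ ∃ y : V, ¬ KReach A (k - 1) x y

/-- Strong connectivity of a digraph. -/
def Strong {V : Type*} (A : V → V → Prop) : Prop :=
  ∀ x y : V, ∃ k : ℕ, KReach A k x y

/-- Semicomplete digraph: at least one arc between any two distinct vertices. -/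
def Semicomplete {V : Type*} (A : V → V → Prop) : Prop :=
  ∀ x y : V, x ≠ y → A x y ∨ A y x

/-- Tournament: exactly one arc between any two distinct vertices, no loops. -/
def IsTournament {V : Type*} (A : V → V → Prop) : Prop :=
  Irreflexive A ∧ ∀ x y : V, x ≠ y → (A x y ↔ ¬ A y x)

/-- Out-degree of a vertex. -/
noncomputable def outDeg {V : Type*} (A : V → V → Prop) (x : V) : ℕ :=
  Set.ncard {y | A x y}

/-- There is a directed cycle of length exactly `k` through `x`. -/
def CycleThrough {V : Type*} (A : V → V → Prop) (k : ℕ) (x : V) : Prop :=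
  ∃ f : ℕ → V, f 0 = x ∧ f k = x ∧ (∀ i < k, A (f i) (f (i + 1))) ∧
    ∀ i j, i < k → j < k → f i = f j → i = j

/-- `x` belongs to a directed cycle of length at most `k`. -/
def OnShortCycle {V : Type*} (A : V → V → Prop) (k : ℕ) (x : V) : Prop :=
  ∃ n : ℕ, 2 ≤ n ∧ n ≤ k ∧ CycleThrough A n x

/-- `AQ` (on `W`) is the composition `T[H_1, …, H_t]` of digraphs over the digraph `AT`
(on index type `ι`), where the fiber of `π` over `i` is the vertex set of `H_i`
(each fiber is nonempty since `π` is surjective), the arcs of `H_i` are the arcs of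
`AQ` inside the fiber over `i`, and arcs between different fibers are determined by `AT`. -/
structure IsComposition {ι W : Type*} (AT : ι → ι → Prop) (AQ : W → W → Prop)
    (π : W → ι) : Prop where
  surj : Function.Surjective π
  cross : ∀ x y : W, π x ≠ π y → (AQ x y ↔ AT (π x) (π y))

/-- The digraph `H_i`: the induced subdigraph on the fiber of `π` over `i`. -/
def FiberArc {ι W : Type*} (AQ : W → W → Prop) (π : W → ι) (i : ι) :
    {w : W // π w = i} → {w : W // π w = i} → Prop :=
  fun a b => AQ a.1 b.1

/-- The induced subdigraph on the vertices satisfying `P`. -/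
def DelArc {V : Type*} (A : V → V → Prop) (P : V → Prop) :
    {v : V // P v} → {v : V // P v} → Prop :=
  fun a b => A a.1 b.1

/-- `{v}` is a `k`-absorbent set: every other vertex reaches `v` in at most `k` steps. -/
def SingletonAbsorbent {V : Type*} (A : V → V → Prop) (k : ℕ) (v : V) : Prop :=
  ∀ x : V, x ≠ v → KReach A k x v

/-- A quasi-kernel: an independent set `K` such that every vertex outside `K`
reaches some vertex of `K` by a path of length at most 2. -/
def QuasiKernel {V : Type*} (A : V → V → Prop) (K : Set V) : Prop :=
  (∀ x ∈ K, ∀ y ∈ K, x ≠ y → ¬ A x y) ∧ ∀ x ∉ K, ∃ y ∈ K, KReach A 2 x y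

/-- A `k`-kernel: a `k`-independent and `(k-1)`-absorbent set. -/
def KKernel {V : Type*} (A : V → V → Prop) (k : ℕ) (K : Set V) : Prop :=
  (∀ x ∈ K, ∀ y ∈ K, x ≠ y → ¬ KReach A (k - 1) x y) ∧
    ∀ x ∉ K, ∃ y ∈ K, KReach A (k - 1) x y

/-- A directed walk of length exactly `n` from `x` to `y`. -/
private def Walk {V : Type*} (A : V → V → Prop) (n : ℕ) (x y : V) : Prop :=
  ∃ f : ℕ → V, f 0 = x ∧ f n = y ∧ ∀ i < n, A (f i) (f (i + 1))

private lemma walk_append {V : Type*} {A : V → V → Prop} {m n : ℕ} {x y z : V}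
    (h1 : Walk A m x y) (h2 : Walk A n y z) : Walk A (m + n) x z := by
  obtain ⟨f, hf0, hfm, hfa⟩ := h1
  obtain ⟨g, hg0, hgn, hga⟩ := h2
  set h : ℕ → V := fun l => if l < m then f l else g (l - m) with hh
  have hfval : ∀ l ≤ m, h l = f l := by
    intro l hl
    by_cases hc : l < m
    · simp [hh, hc]
    · have : l = m := by omega
      subst this
      simp only [hh, hc, if_false, Nat.sub_self]
      rw [hg0, hfm]
  have hgval : ∀ l, m ≤ l → h l = g (l - m) := by
    intro l hl
    have hc : ¬ (l < m) := by omega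
    simp [hh, hc]
  refine ⟨h, ?_, ?_, ?_⟩
  · rw [hfval 0 (Nat.zero_le m), hf0]
  · rw [hgval (m + n) (by omega), Nat.add_sub_cancel_left, hgn]
  · intro i hi
    by_cases hc : i < m
    · rw [hfval i (by omega), hfval (i + 1) (by omega)]
      exact hfa i hc
    · rw [hgval i (by omega), hgval (i + 1) (by omega),
        show i + 1 - m = i - m + 1 by omega]
      exact hga (i - m) (by omega)

private lemma walk_project {ι W : Type*} {AT : ι → ι → Prop} {AQ : W → W → Prop}
    {π : W → ι} (hcomp : IsComposition AT AQ π) :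
    ∀ (n : ℕ) (x y : W), Walk AQ n x y → ∃ m ≤ n, Walk AT m (π x) (π y) := by
  intro n
  induction n with
  | zero =>
    rintro x y ⟨f, h0, hn, _⟩
    refine ⟨0, le_rfl, fun _ => π x, rfl, ?_, by omega⟩
    rw [← h0, hn]
  | succ n ih =>
    rintro x y ⟨f, h0, hn, ha⟩
    obtain ⟨m, hm, g, hg0, hgm, hga⟩ :=
      ih x (f n) ⟨f, h0, rfl, fun i hi => ha i (by omega)⟩
    by_cases hc : π (f n) = π y
    · exact ⟨m, by omega, g, hg0, by rw [hgm, hc], hga⟩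
    · refine ⟨m + 1, by omega, fun l => if l ≤ m then g l else π y, ?_, ?_, ?_⟩
      · simpa using hg0
      · simp
      · intro i hi
        by_cases h : i < m
        · have h1 : i ≤ m := by omega
          have h2 : i + 1 ≤ m := by omega
          simpa [h1, h2] using hga i h
        · have he : i = m := by omega
          subst he
          have h2 : ¬ (i + 1 ≤ i) := by omega
          simp only [le_refl, if_true, h2, if_false]
          rw [hgm]
          have harc : AQ (f n) y := by rw [← hn]; exact ha n (by omega)
          exact (hcomp.cross (f n) y hc).mp harc

private lemma closed_walk_cycle {V : Type*} {A : V → V → Prop} (hA : Irreflexive A) :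
    ∀ (m : ℕ) (x : V), 2 ≤ m → Walk A m x x →
      ∃ n, 2 ≤ n ∧ n ≤ m ∧ CycleThrough A n x := by
  intro m
  induction m using Nat.strong_induction_on with
  | _ m ih =>
    rintro x hm ⟨f, h0, hmx, ha⟩
    by_cases hinj : ∀ i j, i < m → j < m → f i = f j → i = j
    · exact ⟨m, hm, le_rfl, f, h0, hmx, ha, hinj⟩
    · push_neg at hinj
      obtain ⟨a, b, ha', hb', heq, hne⟩ := hinj
      wlog hab : a < b generalizing a b
      · exact this b a hb' ha' heq.symm (Ne.symm hne) (by omega)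
      set d := b - a with hd
      set m' := m - d with hm'
      have hdm : d ≤ m := by omega
      have hm'a : a < m' := by omega
      have hm'lt : m' < m := by omega
      have hwalk : Walk A m' x x := by
        refine ⟨fun l => if l ≤ a then f l else f (l + d), by simp [h0], ?_, ?_⟩
        · have h : ¬ (m' ≤ a) := by omega
          simp only [h, if_false]
          have : m' + d = m := by omega
          rw [this, hmx]
        · intro i hi
          by_cases h1 : i < a
          · have e1 : i ≤ a := by omega
            have e2 : i + 1 ≤ a := by omega
            simpa [e1, e2] using ha i (by omega)
          · by_cases h2 : i = a
            · subst h2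
              have e2 : ¬ (i + 1 ≤ i) := by omega
              simp only [le_refl, if_true, e2, if_false]
              have : i + 1 + d = b + 1 := by omega
              rw [this, heq]
              exact ha b (by omega)
            · have e1 : ¬ (i ≤ a) := by omega
              have e2 : ¬ (i + 1 ≤ a) := by omega
              simp only [e1, e2, if_false]
              have : i + 1 + d = (i + d) + 1 := by omega
              rw [this]
              exact ha (i + d) (by omega)
      have hm'2 : 2 ≤ m' := by
        by_contra hcon
        have hm'1 : m' = 1 := by omega
        obtain ⟨g, hg0, hg1, hga⟩ := hwalk
        have : A x x := by
          have := hga 0 (by omega)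
          rwa [hg0, show (0 : ℕ) + 1 = m' by omega, hg1] at this
        exact hA x this
      obtain ⟨n, hn2, hnle, hc⟩ := ih m' hm'lt x hm'2 hwalk
      exact ⟨n, hn2, by omega, hc⟩

private lemma walk_lift {ι W : Type*} {AT : ι → ι → Prop} {AQ : W → W → Prop}
    {π : W → ι} (hcomp : IsComposition AT AQ π) (hTirr : Irreflexive AT)
    {n : ℕ} (hn : 1 ≤ n) {v y : W} (h : Walk AT n (π v) (π y)) : Walk AQ n v y := by
  classical
  obtain ⟨f, h0, hnn, ha⟩ := h
  choose s hs using hcomp.surj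
  refine ⟨fun l => if l = 0 then v else if l = n then y else s (f l), by simp, ?_, ?_⟩
  · have hn0 : n ≠ 0 := by omega
    simp [hn0]
  · intro i hi
    have hπ : ∀ l, π (if l = 0 then v else if l = n then y else s (f l)) = f l := by
      intro l
      by_cases h1 : l = 0
      · simp [h1, h0]
      · by_cases h2 : l = n
        · have hn0 : n ≠ 0 := by omega
          simp [h1, h2, hn0, hnn]
        · simp [h1, h2, hs]
    have hne : f i ≠ f (i + 1) := fun e => hTirr (f (i + 1)) (e ▸ ha i hi)
    refine (hcomp.cross _ _ ?_).mpr ?_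
    · rw [hπ i, hπ (i + 1)]; exact hne
    · rw [hπ i, hπ (i + 1)]; exact ha i hi

/-- Characterization of digraph compositions with a `k`-king. -/
theorem stmt3 {ι W : Type*} [Fintype ι] [Fintype W] (k : ℕ) (hk : 2 ≤ k)
    (AT : ι → ι → Prop) (AQ : W → W → Prop) (π : W → ι)
    (hcard : 2 ≤ Fintype.card ι)
    (hTirr : Irreflexive AT) (hQirr : Irreflexive AQ)
    (hcomp : IsComposition AT AQ π) :
    (∃ v : W, IsKKing AQ k v) ↔
      ∃ i : ι, IsKKing AT k i ∧
        ((∃ v : {w : W // π w = i}, IsKKing (FiberArc AQ π i) k v) ∨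
          (2 ≤ Nat.card {w : W // π w = i} ∧ OnShortCycle AT k i)) := by
  classical
  constructor
  · rintro ⟨v, hv⟩
    refine ⟨π v, ?_, ?_⟩
    · -- π v is a k-king of T
      intro j
      obtain ⟨w, hw⟩ := hcomp.surj j
      obtain ⟨n, hnk, hwalk⟩ := hv w
      obtain ⟨m, hm, hw'⟩ := walk_project hcomp n v w hwalk
      rw [hw] at hw'
      exact ⟨m, le_trans hm hnk, hw'⟩
    · by_cases hking : IsKKing (FiberArc AQ π (π v)) k ⟨v, rfl⟩
      · exact Or.inl ⟨⟨v, rfl⟩, hking⟩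
      · obtain ⟨y, hy⟩ := not_forall.mp hking
        right
        have hyne : (⟨v, rfl⟩ : {w : W // π w = π v}) ≠ y := by
          rintro rfl
          exact hy ⟨0, by omega, fun _ => ⟨v, rfl⟩, rfl, rfl, by omega⟩
        constructor
        · have : Nontrivial {w : W // π w = π v} := ⟨⟨v, rfl⟩, y, hyne⟩
          rw [Nat.card_eq_fintype_card]
          exact Fintype.one_lt_card_iff_nontrivial.mpr this
        · obtain ⟨n, hnk, f, hf0, hfn, hfa⟩ := hv y.1
          have hex : ∃ j ≤ n, π (f j) ≠ π v := by
            by_contra hcon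
            push_neg at hcon
            apply hy
            refine ⟨n, hnk, fun l => if hl : l ≤ n then ⟨f l, hcon l hl⟩
              else ⟨v, rfl⟩, ?_, ?_, ?_⟩
            · simp only [Nat.zero_le, dif_pos]
              exact Subtype.ext hf0
            · simp only [le_refl, dif_pos]
              exact Subtype.ext hfn
            · intro i hi
              have h1 : i ≤ n := by omega
              have h2 : i + 1 ≤ n := by omega
              simp only [h1, h2, dif_pos]
              exact hfa i hi
          obtain ⟨j, hj, hjne⟩ := hex
          have hj0 : j ≠ 0 := by rintro rfl; exact hjne (by rw [hf0])
          have hjn : j ≠ n := by rintro rfl; exact hjne (by rw [hfn]; exact y.2)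
          have hwalk1 : Walk AQ j v (f j) :=
            ⟨f, hf0, rfl, fun i hi => hfa i (by omega)⟩
          have hwalk2 : Walk AQ (n - j) (f j) y.1 := by
            refine ⟨fun l => f (j + l), by simp, ?_, ?_⟩
            · show f (j + (n - j)) = y.1
              rw [show j + (n - j) = n by omega, hfn]
            · intro i hi
              show AQ (f (j + i)) (f (j + (i + 1)))
              rw [show j + (i + 1) = (j + i) + 1 by omega]
              exact hfa (j + i) (by omega)
          obtain ⟨m1, hm1, hp1⟩ := walk_project hcomp j v (f j) hwalk1
          obtain ⟨m2, hm2, hp2⟩ := walk_project hcomp (n - j) (f j) y.1 hwalk2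
          have hm1' : 1 ≤ m1 := by
            by_contra hcon
            obtain ⟨g, hg0, hgm, _⟩ := hp1
            apply hjne
            rw [← hgm, show m1 = 0 by omega, hg0]
          have hm2' : 1 ≤ m2 := by
            by_contra hcon
            obtain ⟨g, hg0, hgm, _⟩ := hp2
            apply hjne
            rw [← hg0, show (0 : ℕ) = m2 by omega, hgm]
            exact y.2
          rw [y.2] at hp2
          have hclosed : Walk AT (m1 + m2) (π v) (π v) := walk_append hp1 hp2
          obtain ⟨c, hc2, hcle, hcyc⟩ :=
            closed_walk_cycle hTirr (m1 + m2) (π v) (by omega) hclosed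
          exact ⟨c, hc2, by omega, hcyc⟩
  · rintro ⟨i, hking, hcase⟩
    rcases hcase with ⟨v, hv⟩ | ⟨hcard2, n, hn2, hnk, hcyc⟩
    · refine ⟨v.1, ?_⟩
      intro y
      by_cases hy : π y = i
      · obtain ⟨n, hn, f, h0, hn', hfa⟩ := hv ⟨y, hy⟩
        exact ⟨n, hn, fun l => (f l).1, congrArg Subtype.val h0,
          congrArg Subtype.val hn', fun i hi => hfa i hi⟩
      · obtain ⟨n, hn, f, h0, hn', hfa⟩ := hking (π y)
        have hne0 : n ≠ 0 := by
          rintro rfl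
          apply hy
          rw [← hn', h0]
        have hwalk : Walk AQ n v.1 y :=
          walk_lift hcomp hTirr (by omega)
            ⟨f, by rw [h0, v.2], hn', hfa⟩
        exact ⟨n, hn, hwalk⟩
    · obtain ⟨v, hvi⟩ := hcomp.surj i
      refine ⟨v, ?_⟩
      intro y
      by_cases hvy : y = v
      · exact ⟨0, by omega, fun _ => v, rfl, hvy.symm, by omega⟩
      by_cases hy : π y = i
      · obtain ⟨f, h0, hn', hfa, _⟩ := hcyc
        have hwalk : Walk AQ n v y :=
          walk_lift hcomp hTirr (by omega)
            ⟨f, by rw [h0, hvi], by rw [hn', hy], hfa⟩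
        exact ⟨n, hnk, hwalk⟩
      · obtain ⟨m, hm, f, h0, hm', hfa⟩ := hking (π y)
        have hne0 : m ≠ 0 := by
          rintro rfl
          apply hy
          rw [← hm', h0]
        have hwalk : Walk AQ m v y :=
          walk_lift hcomp hTirr (by omega)
            ⟨f, by rw [h0, hvi], hm', hfa⟩
        exact ⟨m, hm, hwalk⟩
end

section
/- Let k ≥ 2 be an integer and Q = T[H_1, ..., H_t] a digraph composition. Then every vertex of Q is a k-king of Q if and only if for each i ∈ [t], u_i is a k-king of T and at least one of the following holds: (i) every vertex of H_i is a k-king of H_i; (ii) |V(H_i)| ≥ 2 and u_i belongs to a directed cycle of T of length at most k. -/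
section DWalkAux

variable {V : Type*} {A : V → V → Prop}

/-- A directed walk of length exactly `n` from `x` to `y`. -/
def DWalk (A : V → V → Prop) (n : ℕ) (x y : V) : Prop :=
  ∃ f : ℕ → V, f 0 = x ∧ f n = y ∧ ∀ i < n, A (f i) (f (i + 1))

lemma dwalk_refl (x : V) : DWalk A 0 x x :=
  ⟨fun _ => x, rfl, rfl, by omega⟩

lemma dwalk_zero {x y : V} (h : DWalk A 0 x y) : x = y := by
  obtain ⟨f, h0, hn, _⟩ := h
  rw [← h0, hn]

lemma kreach_def {k : ℕ} {x y : V} :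
    KReach A k x y ↔ ∃ n, n ≤ k ∧ DWalk A n x y := Iff.rfl

lemma dwalk_append {m : ℕ} {x y z : V} (h : DWalk A m x y) (ha : A y z) :
    DWalk A (m + 1) x z := by
  obtain ⟨f, h0, hn, harc⟩ := h
  refine ⟨fun i => if i ≤ m then f i else z, by simp [h0], by simp, ?_⟩
  intro i hi
  rcases Nat.lt_or_ge i m with h' | h'
  · simp only [if_pos (by omega : i ≤ m), if_pos (by omega : i + 1 ≤ m)]
    exact harc i h'
  · have : i = m := by omega
    subst this
    simp only [if_pos (le_refl i), if_neg (by omega : ¬ i + 1 ≤ i), hn]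
    exact ha

lemma dwalk_trans {m n : ℕ} {x y z : V} (h1 : DWalk A m x y) (h2 : DWalk A n y z) :
    DWalk A (m + n) x z := by
  induction n generalizing z with
  | zero => rw [dwalk_zero h2] at h1; simpa using h1
  | succ n ih =>
    obtain ⟨g, g0, gn, garc⟩ := h2
    have hmid : DWalk A n y (g n) := ⟨g, g0, rfl, fun i hi => garc i (by omega)⟩
    have ha : A (g n) z := gn ▸ garc n (by omega)
    exact dwalk_append (ih hmid) ha

lemma dwalk_compress :
    ∀ (n : ℕ) (f : ℕ → V), (∀ m < n, f m = f (m + 1) ∨ A (f m) (f (m + 1))) →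
      ∃ n' ≤ n, DWalk A n' (f 0) (f n) := by
  intro n
  induction n with
  | zero => exact fun f _ => ⟨0, le_refl _, dwalk_refl _⟩
  | succ n ih =>
    intro f h
    obtain ⟨n', hn', hw⟩ := ih f (fun m hm => h m (by omega))
    rcases h n (by omega) with he | ha
    · exact ⟨n', by omega, he ▸ hw⟩
    · exact ⟨n' + 1, by omega, dwalk_append hw ha⟩

/-- From a closed walk of positive length `≤ k` at `x` extract a short cycle through `x`. -/
lemma extract_cycle (hirr : Irreflexive A) (k : ℕ) (x : V) :
    ∀ m, 1 ≤ m → m ≤ k → DWalk A m x x → OnShortCycle A k x := by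
  intro m
  induction m using Nat.strong_induction_on with
  | _ m ih =>
    intro h1 hk hw
    obtain ⟨f, h0, hn, harc⟩ := hw
    rcases eq_or_lt_of_le h1 with h1' | h2
    · exfalso
      have := harc 0 (by omega)
      rw [h0, show (0 + 1 : ℕ) = m by omega, hn] at this
      exact hirr x this
    by_cases hinj : ∀ a b, a < m → b < m → f a = f b → a = b
    · exact ⟨m, h2, hk, f, h0, hn, harc, hinj⟩
    · push_neg at hinj
      obtain ⟨a, b, ha, hb, hab, hne⟩ := hinj
      -- make a < b
      have key : ∀ a b, a < m → b < m → f a = f b → a < b →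
          OnShortCycle A k x := by
        clear ha hb hab hne a b
        intro a b ha hb hab hlt
        set g : ℕ → V := fun t => if t ≤ a then f t else f (t + (b - a)) with hg
        have hw' : DWalk A (m - (b - a)) x x := by
          refine ⟨g, by simp [hg, h0], ?_, ?_⟩
          · have hgt : ¬ (m - (b - a) ≤ a) := by omega
            simp only [hg, if_neg hgt]
            rw [show m - (b - a) + (b - a) = m by omega, hn]
          · intro t ht
            rcases Nat.lt_or_ge (t + 1) (a + 1) with h' | h'
            · simp only [hg, if_pos (by omega : t ≤ a), if_pos (by omega : t + 1 ≤ a)]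
              exact harc t (by omega)
            · rcases Nat.lt_or_ge a t with h'' | h''
              · simp only [hg, if_neg (by omega : ¬ t ≤ a), if_neg (by omega : ¬ t + 1 ≤ a)]
                rw [show t + 1 + (b - a) = t + (b - a) + 1 by omega]
                exact harc (t + (b - a)) (by omega)
              · have hta : t = a := by omega
                subst hta
                simp only [hg, if_pos (le_refl t), if_neg (by omega : ¬ t + 1 ≤ t)]
                rw [hab, show t + 1 + (b - t) = b + 1 by omega]
                exact harc b hb
        exact ih (m - (b - a)) (by omega) (by omega) (by omega) hw'
      rcases Nat.lt_or_gt_of_ne hne with hlt | hlt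
      · exact key a b ha hb hab hlt
      · exact key b a hb ha hab.symm hlt

end DWalkAux

/-- Lifting a walk in `T` to a walk in the composition `Q`. -/
lemma dwalk_lift {ι W : Type*} {AT : ι → ι → Prop} {AQ : W → W → Prop} {π : W → ι}
    (hcomp : IsComposition AT AQ π) (hTirr : Irreflexive AT)
    {n : ℕ} (hn : 1 ≤ n) {i j : ι} {v y : W} (hv : π v = i) (hy : π y = j)
    (hw : DWalk AT n i j) : DWalk AQ n v y := by
  classical
  obtain ⟨f, h0, hfn, harc⟩ := hw
  have hsec : ∀ a, π (Function.surjInv hcomp.surj a) = a :=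
    Function.rightInverse_surjInv hcomp.surj
  set g : ℕ → W := fun m =>
    if m = 0 then v else if m = n then y else Function.surjInv hcomp.surj (f m) with hgdef
  have hg : ∀ m, m ≤ n → π (g m) = f m := by
    intro m hm
    by_cases h0' : m = 0
    · subst h0'; simp [hgdef, hv, h0]
    · by_cases hn' : m = n
      · subst hn'; simp [hgdef, h0', hy, hfn]
      · simp [hgdef, h0', hn', hsec]
  refine ⟨g, by simp [hgdef], ?_, ?_⟩
  · have hn0 : n ≠ 0 := by omega
    simp [hgdef, hn0]
  · intro m hm
    have hneq : π (g m) ≠ π (g (m + 1)) := by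
      rw [hg m (by omega), hg (m + 1) (by omega)]
      exact fun he => hTirr _ (he ▸ harc m hm)
    refine (hcomp.cross _ _ hneq).2 ?_
    rw [hg m (by omega), hg (m + 1) (by omega)]
    exact harc m hm


/-- Characterization of digraph compositions all of whose vertices are `k`-kings. -/
theorem stmt4 {ι W : Type*} [Fintype ι] [Fintype W] (k : ℕ) (hk : 2 ≤ k)
    (AT : ι → ι → Prop) (AQ : W → W → Prop) (π : W → ι)
    (hcard : 2 ≤ Fintype.card ι)
    (hTirr : Irreflexive AT) (hQirr : Irreflexive AQ)
    (hcomp : IsComposition AT AQ π) :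
    (∀ v : W, IsKKing AQ k v) ↔
      ∀ i : ι, IsKKing AT k i ∧
        ((∀ v : {w : W // π w = i}, IsKKing (FiberArc AQ π i) k v) ∨
          (2 ≤ Nat.card {w : W // π w = i} ∧ OnShortCycle AT k i)) := by
  classical
  constructor
  · intro hall i
    constructor
    · -- u_i is a k-king of T
      intro j
      by_cases hij : i = j
      · exact hij ▸ ⟨0, by omega, dwalk_refl _⟩
      · obtain ⟨vi, hvi⟩ := hcomp.surj i
        obtain ⟨vj, hvj⟩ := hcomp.surj j
        obtain ⟨n, hn, f, h0, hfn, harc⟩ := hall vi vj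
        have hrel : ∀ m < n, π (f m) = π (f (m + 1)) ∨ AT (π (f m)) (π (f (m + 1))) := by
          intro m hm
          by_cases h : π (f m) = π (f (m + 1))
          · exact Or.inl h
          · exact Or.inr ((hcomp.cross _ _ h).1 (harc m hm))
        obtain ⟨n', hn', hw⟩ := dwalk_compress n (fun m => π (f m)) hrel
        rw [kreach_def]
        refine ⟨n', le_trans hn' hn, ?_⟩
        simpa [h0, hfn, hvi, hvj] using hw
    · by_cases hking : ∀ v : {w : W // π w = i}, IsKKing (FiberArc AQ π i) k v
      · exact Or.inl hking
      · right
        push_neg at hking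
        obtain ⟨v, hv⟩ := hking
        simp only [IsKKing, not_forall] at hv
        obtain ⟨y, hvy⟩ := hv
        have hne : v ≠ y := by
          rintro rfl
          exact hvy ⟨0, by omega, dwalk_refl _⟩
        constructor
        · have : Nontrivial {w : W // π w = i} := ⟨v, y, hne⟩
          have h1 := Fintype.one_lt_card_iff_nontrivial.mpr this
          rw [Nat.card_eq_fintype_card]
          omega
        · obtain ⟨n, hn, f, h0, hfn, harc⟩ := hall v.1 y.1
          by_cases hin : ∀ m ≤ n, π (f m) = i
          · exfalso
            apply hvy
            refine ⟨n, hn, fun m => ⟨f (min m n), hin _ (min_le_right _ _)⟩, ?_, ?_, ?_⟩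
            · exact Subtype.ext (by simpa using h0)
            · exact Subtype.ext (by simpa using hfn)
            · intro m hm
              show AQ (f (min m n)) (f (min (m + 1) n))
              rw [min_eq_left (by omega), min_eq_left (by omega)]
              exact harc m hm
          · push_neg at hin
            obtain ⟨m0, hm0n, hm0⟩ := hin
            have hf0 : π (f 0) = i := by rw [h0]; exact v.2
            have hfni : π (f n) = i := by rw [hfn]; exact y.2
            have hrel : ∀ m < n, π (f m) = π (f (m + 1)) ∨ AT (π (f m)) (π (f (m + 1))) := by
              intro m hm
              by_cases h : π (f m) = π (f (m + 1))
              · exact Or.inl h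
              · exact Or.inr ((hcomp.cross _ _ h).1 (harc m hm))
            obtain ⟨n1, hn1, hw1⟩ := dwalk_compress m0 (fun m => π (f m))
              (fun m hm => hrel m (by omega))
            obtain ⟨n2, hn2, hw2⟩ := dwalk_compress (n - m0) (fun m => π (f (m0 + m)))
              (fun m hm => by
                have h' := hrel (m0 + m) (by omega)
                rwa [show m0 + m + 1 = m0 + (m + 1) by omega] at h')
            simp only [hf0] at hw1
            have heq : m0 + (n - m0) = n := by omega
            simp only [heq, hfni] at hw2
            have hpos1 : 1 ≤ n1 := by
              rcases Nat.eq_zero_or_pos n1 with h0' | h0'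
              · subst h0'; exact absurd (dwalk_zero hw1) (fun he => hm0 he.symm)
              · exact h0'
            have hpos2 : 1 ≤ n2 := by
              rcases Nat.eq_zero_or_pos n2 with h0' | h0'
              · subst h0'; exact absurd (dwalk_zero hw2) hm0
              · exact h0'
            exact extract_cycle hTirr k i (n1 + n2) (by omega) (by omega)
              (dwalk_trans hw1 hw2)
  · intro hcond v ytgt
    obtain ⟨hking, hcase⟩ := hcond (π v)
    by_cases hij : π ytgt = π v
    · rcases hcase with h1 | h2
      · obtain ⟨n, hn, f, h0, hfn, harc⟩ := h1 ⟨v, rfl⟩ ⟨ytgt, hij⟩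
        refine ⟨n, hn, fun m => (f m).1, by simpa using congrArg Subtype.val h0, by simpa using congrArg Subtype.val hfn, fun m hm => harc m hm⟩
      · obtain ⟨_, ncyc, hc2, hck, f, h0, hfn, harc, _⟩ := h2
        have hw : DWalk AT ncyc (π v) (π v) := ⟨f, h0, hfn, harc⟩
        exact ⟨ncyc, hck, dwalk_lift hcomp hTirr (by omega) rfl hij hw⟩
    · obtain ⟨n, hn, hw⟩ := hking (π ytgt)
      have hn1 : 1 ≤ n := by
        rcases Nat.eq_zero_or_pos n with h0' | h0'
        · subst h0'; exact absurd (dwalk_zero hw).symm hij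
        · exact h0'
      exact ⟨n, hn, dwalk_lift hcomp hTirr hn1 rfl rfl hw⟩
end

section
/- Every strongly connected semicomplete digraph on n ≥ 3 vertices is vertex-pancyclic; that is, for every vertex x and every integer k with 3 ≤ k ≤ n, there exists a directed cycle of length k through x. -/
section Aux

variable {V : Type*} {A : V → V → Prop}

lemma kreach_closed (P : V → Prop) (hP : ∀ a b, P a → A a b → P b) :
    ∀ k x y, P x → KReach A k x y → P y := by
  rintro k x y hx ⟨n, hn, f, hf0, hfn, harc⟩
  have key : ∀ i, i ≤ n → P (f i) := by
    intro i
    induction i with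
    | zero => intro _; rwa [hf0]
    | succ j ih => intro h; exact hP _ _ (ih (by omega)) (harc j (by omega))
  rw [← hfn]; exact key n le_rfl

lemma exists_in (hstrong : Strong A) {x y0 : V} (hne : y0 ≠ x) : ∃ z, A z x := by
  by_contra h
  push_neg at h
  obtain ⟨k, hk⟩ := hstrong y0 x
  exact (kreach_closed (fun v => v ≠ x)
    (fun a b ha hab hbx => h a (hbx ▸ hab)) k y0 x hne hk) rfl

lemma cycle_two {x y : V} (hxy : A x y) (hyx : A y x) (hne : x ≠ y) :
    CycleThrough A 2 x := by
  refine ⟨fun i => if i = 1 then y else x, by simp, by simp, ?_, ?_⟩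
  · intro i hi
    interval_cases i <;> simp [hxy, hyx]
  · intro i j hi hj hij
    interval_cases i <;> interval_cases j <;> simp_all

lemma cycle_three {x y z : V} (hxy : A x y) (hyz : A y z) (hzx : A z x)
    (hxy' : x ≠ y) (hxz : x ≠ z) (hyz' : y ≠ z) : CycleThrough A 3 x := by
  refine ⟨fun i => if i = 1 then y else if i = 2 then z else x, by simp, by simp, ?_, ?_⟩
  · intro i hi
    interval_cases i <;> simp [hxy, hyz, hzx]
  · intro i j hi hj hij
    interval_cases i <;> interval_cases j <;> simp_all

lemma base_cycle [Fintype V] (hirr : Irreflexive A) (hsemi : Semicomplete A)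
    (hstrong : Strong A) (hcard : 3 ≤ Fintype.card V) (x : V) :
    CycleThrough A 2 x ∨ CycleThrough A 3 x := by
  obtain ⟨y0, hy0⟩ := Fintype.exists_ne_of_one_lt_card (by omega) x
  by_cases h2 : ∃ y, A x y ∧ A y x
  · obtain ⟨y, ha, hb⟩ := h2
    exact Or.inl (cycle_two ha hb (fun h => hirr x (h ▸ ha)))
  push_neg at h2
  right
  by_cases h3 : ∃ y z, A x y ∧ A z x ∧ A y z
  · obtain ⟨y, z, hxy, hzx, hyz⟩ := h3
    refine cycle_three hxy hyz hzx ?_ ?_ ?_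
    · intro h; exact hirr x (h ▸ hxy)
    · intro h; exact hirr x (h ▸ hzx)
    · intro h; exact h2 y hxy (h ▸ hzx)
  · exfalso
    push_neg at h3
    obtain ⟨z, hz⟩ := exists_in hstrong hy0
    have hzx_ne : z ≠ x := fun h => hirr x (h ▸ hz)
    have hP : ∀ a b, (a = x ∨ A x a) → A a b → (b = x ∨ A x b) := by
      rintro a b (rfl | ha) hab
      · exact Or.inr hab
      · rcases eq_or_ne b x with rfl | hbx
        · exact absurd hab (h2 a ha)
        · rcases hsemi b x hbx with hbx' | hxb
          · exact absurd hab (h3 a b ha hbx')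
          · exact Or.inr hxb
    obtain ⟨k, hk⟩ := hstrong x z
    rcases kreach_closed _ hP k x z (Or.inl rfl) hk with h | h
    · exact hzx_ne h
    · exact h2 z h hz

lemma extend_cycle [Fintype V] (hirr : Irreflexive A) (hsemi : Semicomplete A)
    (hstrong : Strong A) {x : V} {k : ℕ} (hk2 : 2 ≤ k) (hkn : k < Fintype.card V)
    (hc : CycleThrough A k x) : CycleThrough A (k + 1) x := by
  classical
  obtain ⟨f, hf0, hfk, harc, hinj⟩ := hc
  have hout : ∃ w : V, ∀ i < k, f i ≠ w := by
    by_contra h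
    push_neg at h
    have hsub : (Finset.univ : Finset V) ⊆ (Finset.range k).image f := by
      intro w _
      obtain ⟨i, hi, hfi⟩ := h w
      exact Finset.mem_image.mpr ⟨i, Finset.mem_range.mpr hi, hfi⟩
    have h1 := Finset.card_le_card hsub
    have h2 := Finset.card_image_le (s := Finset.range k) (f := f)
    rw [Finset.card_range] at h2
    rw [Finset.card_univ] at h1
    omega
  by_cases hcase : ∃ w, (∀ i < k, f i ≠ w) ∧ (∃ i < k, A (f i) w) ∧ (∃ j < k, A w (f j))
  · -- w has arcs both from and to the cycle: insert it
    obtain ⟨w, hwC, ⟨i0, hi0, hi0a⟩, ⟨j0, hj0, hj0a⟩⟩ := hcase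
    have hcons : ∃ p < k, A (f p) w ∧ A w (f ((p + 1) % k)) := by
      by_contra hno
      push_neg at hno
      have hall : ∀ d : ℕ, A (f ((i0 + d) % k)) w := by
        intro d
        induction d with
        | zero => simpa [Nat.mod_eq_of_lt hi0] using hi0a
        | succ d ih =>
          have hqk : (i0 + d) % k < k := Nat.mod_lt _ (by omega)
          have hnw : ¬ A w (f (((i0 + d) % k + 1) % k)) := hno _ hqk ih
          have hne : f (((i0 + d) % k + 1) % k) ≠ w := hwC _ (Nat.mod_lt _ (by omega))
          have harcw : A (f (((i0 + d) % k + 1) % k)) w :=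
            (hsemi w _ (fun h => hne h.symm)).resolve_left hnw
          have heq : (i0 + (d + 1)) % k = ((i0 + d) % k + 1) % k := by
            rw [show i0 + (d + 1) = (i0 + d) + 1 by omega, Nat.add_mod (i0 + d) 1 k,
              Nat.mod_eq_of_lt (show 1 < k by omega)]
          rw [heq]; exact harcw
      set p := (j0 + k - 1) % k with hp
      have hpk : p < k := Nat.mod_lt _ (by omega)
      have hfp : A (f p) w := by
        have h1 : (i0 + (p + k - i0)) % k = p := by
          rw [show i0 + (p + k - i0) = p + k by omega, Nat.add_mod_right,
            Nat.mod_eq_of_lt hpk]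
        have := hall (p + k - i0)
        rwa [h1] at this
      have h2 := hno p hpk hfp
      have h3 : (p + 1) % k = j0 := by
        rcases Nat.eq_zero_or_pos j0 with rfl | hj
        · have hpe : p = k - 1 := by
            rw [hp, Nat.mod_eq_of_lt (by omega)]
            omega
          rw [hpe, show k - 1 + 1 = k by omega, Nat.mod_self]
        · have hpe : p = j0 - 1 := by
            rw [hp, show j0 + k - 1 = (j0 - 1) + k by omega, Nat.add_mod_right,
              Nat.mod_eq_of_lt (by omega)]
          rw [hpe, show j0 - 1 + 1 = j0 by omega, Nat.mod_eq_of_lt hj0]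
      rw [h3] at h2
      exact h2 hj0a
    obtain ⟨p, hpk, hpw, hwp⟩ := hcons
    refine ⟨fun i => if i ≤ p then f i else if i = p + 1 then w else f (i - 1),
      ?_, ?_, ?_, ?_⟩
    · beta_reduce
      rw [if_pos (Nat.zero_le p)]
      exact hf0
    · beta_reduce
      rw [if_neg (by omega : ¬ (k + 1 ≤ p)), if_neg (by omega : ¬ (k + 1 = p + 1))]
      simpa using hfk
    · intro i hi
      beta_reduce
      rcases lt_trichotomy i p with hip | hip | hip
      · rw [if_pos (by omega : i ≤ p), if_pos (by omega : i + 1 ≤ p)]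
        exact harc i (by omega)
      · rw [if_pos (by omega : i ≤ p), if_neg (by omega : ¬ (i + 1 ≤ p)),
          if_pos (by omega : i + 1 = p + 1), hip]
        exact hpw
      · rcases eq_or_lt_of_le (show p + 1 ≤ i by omega) with hip2 | hip2
        · -- i = p + 1 : arc from w
          rw [if_neg (by omega : ¬ (i ≤ p)), if_pos hip2.symm,
            if_neg (by omega : ¬ (i + 1 ≤ p)), if_neg (by omega : ¬ (i + 1 = p + 1)),
            show i + 1 - 1 = p + 1 by omega]
          rcases eq_or_lt_of_le (show p + 1 ≤ k by omega) with hk' | hk'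
          · rw [show p + 1 = k from hk', hfk, ← hf0]
            have hz : (p + 1) % k = 0 := by rw [hk', Nat.mod_self]
            rwa [hz] at hwp
          · rwa [Nat.mod_eq_of_lt hk'] at hwp
        · rw [if_neg (by omega : ¬ (i ≤ p)), if_neg (by omega : ¬ (i = p + 1)),
            if_neg (by omega : ¬ (i + 1 ≤ p)), if_neg (by omega : ¬ (i + 1 = p + 1)),
            show i + 1 - 1 = (i - 1) + 1 by omega]
          exact harc (i - 1) (by omega)
    · intro i j hi hj hij
      beta_reduce at hij
      split_ifs at hij <;>
        first
          | omega
          | exact hinj i j (by omega) (by omega) hij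
          | (have := hinj i (j - 1) (by omega) (by omega) hij; omega)
          | (have := hinj (i - 1) j (by omega) (by omega) hij; omega)
          | (have := hinj (i - 1) (j - 1) (by omega) (by omega) hij; omega)
          | exact absurd hij (hwC i (by omega))
          | exact absurd hij.symm (hwC j (by omega))
          | exact absurd hij (hwC (i - 1) (by omega))
          | exact absurd hij.symm (hwC (j - 1) (by omega))
  · -- every outside vertex either dominates C or is dominated by C
    push_neg at hcase
    have hdich : ∀ w, (∀ i < k, f i ≠ w) →
        (∀ i < k, ¬ A (f i) w) ∨ (∀ j < k, ¬ A w (f j)) := by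
      intro w hw
      by_cases h : ∃ i < k, A (f i) w
      · exact Or.inr (fun j hj => hcase w hw h j hj)
      · push_neg at h
        exact Or.inl h
    obtain ⟨w0, hw0⟩ := hout
    have hexS : ∃ s, (∀ i < k, f i ≠ s) ∧ ∀ i < k, ¬ A (f i) s := by
      by_contra h
      push_neg at h
      have hclosed : ∀ a b, (∀ i < k, f i ≠ a) → A a b → (∀ i < k, f i ≠ b) := by
        intro a b ha hab i hik hfi
        obtain ⟨j, hj, hja⟩ := h a ha
        rcases hdich a ha with hS | hR
        · exact hS j hj hja
        · exact hR i hik (by rw [hfi]; exact hab)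
      obtain ⟨m, hm⟩ := hstrong w0 x
      exact (kreach_closed _ hclosed m w0 x hw0 hm) 0 (by omega) hf0
    have hexArc : ∃ r s, (∀ i < k, f i ≠ r) ∧ (∀ j < k, ¬ A r (f j)) ∧
        (∀ i < k, f i ≠ s) ∧ (∀ i < k, ¬ A (f i) s) ∧ A r s := by
      by_contra h
      push_neg at h
      obtain ⟨s, hsC, hsS⟩ := hexS
      have hsR : ¬ (∀ j < k, ¬ A s (f j)) := by
        intro hsR
        rcases hsemi s (f 0) (fun he => hsC 0 (by omega) he.symm) with h1 | h1
        · exact hsR 0 (by omega) h1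
        · exact hsS 0 (by omega) h1
      have hclosed : ∀ a b,
          ((∃ i < k, f i = a) ∨ ((∀ i < k, f i ≠ a) ∧ ∀ j < k, ¬ A a (f j))) →
          A a b →
          ((∃ i < k, f i = b) ∨ ((∀ i < k, f i ≠ b) ∧ ∀ j < k, ¬ A b (f j))) := by
        rintro a b ha hab
        by_cases hb : ∃ i < k, f i = b
        · exact Or.inl hb
        · push_neg at hb
          rcases hdich b hb with hbS | hbR
          · exfalso
            rcases ha with ⟨i, hik, rfl⟩ | ⟨haC, haR⟩
            · exact hbS i hik hab
            · exact h a b haC haR hb hbS hab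
          · exact Or.inr ⟨hb, hbR⟩
      obtain ⟨m, hm⟩ := hstrong x s
      rcases kreach_closed _ hclosed m x s (Or.inl ⟨0, by omega, hf0⟩) hm with
        ⟨i, hik, hfi⟩ | ⟨_, hsR'⟩
      · exact hsC i hik hfi
      · exact hsR hsR'
    obtain ⟨r, s, hrC, hrR, hsC, hsS, hrs⟩ := hexArc
    have hrs_ne : r ≠ s := fun h => hirr r (h ▸ hrs)
    have hCr : ∀ i < k, A (f i) r :=
      fun i hik => (hsemi (f i) r (hrC i hik)).resolve_right (hrR i hik)
    have hsC' : ∀ j < k, A s (f j) :=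
      fun j hj => (hsemi s (f j) (fun he => hsC j hj he.symm)).resolve_right (hsS j hj)
    refine ⟨fun i => if i < k - 1 then f i else if i = k - 1 then r
        else if i = k then s else x, ?_, ?_, ?_, ?_⟩
    · beta_reduce
      rw [if_pos (by omega : 0 < k - 1)]
      exact hf0
    · beta_reduce
      rw [if_neg (by omega : ¬ (k + 1 < k - 1)), if_neg (by omega : ¬ (k + 1 = k - 1)),
        if_neg (by omega : ¬ (k + 1 = k))]
    · intro i hi
      beta_reduce
      rcases lt_trichotomy (i + 1) (k - 1) with h1 | h1 | h1
      · rw [if_pos (by omega : i < k - 1), if_pos h1]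
        exact harc i (by omega)
      · rw [if_pos (by omega : i < k - 1), if_neg (by omega : ¬ (i + 1 < k - 1)),
          if_pos h1]
        exact hCr i (by omega)
      · rcases eq_or_lt_of_le (show k - 1 ≤ i by omega) with h2 | h2
        · -- i = k - 1
          rw [if_neg (by omega : ¬ (i < k - 1)), if_pos h2.symm,
            if_neg (by omega : ¬ (i + 1 < k - 1)), if_neg (by omega : ¬ (i + 1 = k - 1)),
            if_pos (by omega : i + 1 = k)]
          exact hrs
        · -- i = k
          rw [if_neg (by omega : ¬ (i < k - 1)), if_neg (by omega : ¬ (i = k - 1)),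
            if_pos (by omega : i = k), if_neg (by omega : ¬ (i + 1 < k - 1)),
            if_neg (by omega : ¬ (i + 1 = k - 1)), if_neg (by omega : ¬ (i + 1 = k)),
            ← hf0]
          exact hsC' 0 (by omega)
    · intro i j hi hj hij
      beta_reduce at hij
      split_ifs at hij <;>
        first
          | omega
          | exact hinj i j (by omega) (by omega) hij
          | exact absurd hij hrs_ne
          | exact absurd hij.symm hrs_ne
          | exact absurd hij (hrC i (by omega))
          | exact absurd hij.symm (hrC j (by omega))
          | exact absurd hij (hsC i (by omega))
          | exact absurd hij.symm (hsC j (by omega))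

end Aux

/-- Every strongly connected semicomplete digraph on at least 3 vertices is
vertex-pancyclic. -/
theorem stmt5 {V : Type*} [Fintype V] (A : V → V → Prop)
    (hirr : Irreflexive A) (hsemi : Semicomplete A) (hstrong : Strong A)
    (hcard : 3 ≤ Fintype.card V) :
    ∀ x : V, ∀ k : ℕ, 3 ≤ k → k ≤ Fintype.card V → CycleThrough A k x := by
  intro x k hk3 hkn
  have h3 : CycleThrough A 3 x := by
    rcases base_cycle hirr hsemi hstrong hcard x with h | h
    · exact extend_cycle hirr hsemi hstrong (by omega) (by omega) h
    · exact h
  revert hkn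
  induction k, hk3 using Nat.le_induction with
  | base => intro _; exact h3
  | succ m hm ih =>
    intro hkn
    exact extend_cycle hirr hsemi hstrong (by omega) (by omega) (ih (by omega))
end

section
/- Let Q = T[H_1, ..., H_t] be a strongly connected semicomplete composition. Then a vertex v ∈ V(H_i) is a 3-king of Q if and only if u_i is a 3-king of T. In particular, Q has a 3-king. -/
section Helpers

variable {V : Type*} {A : V → V → Prop}

lemma kreach_refl (k : ℕ) (x : V) : KReach A k x x :=
  ⟨0, Nat.zero_le _, fun _ => x, rfl, rfl, fun i hi => absurd hi (Nat.not_lt_zero i)⟩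

lemma kreach_mono {k m : ℕ} (h : k ≤ m) {x y : V} : KReach A k x y → KReach A m x y :=
  fun ⟨n, hn, hf⟩ => ⟨n, hn.trans h, hf⟩

lemma kreach_arc {x y : V} (h : A x y) : KReach A 1 x y := by
  refine ⟨1, le_rfl, fun i => if i = 0 then x else y, by simp, by simp, ?_⟩
  intro i hi
  interval_cases i
  simpa using h

lemma kreach_cons {x y z : V} {k : ℕ} (h : A x y) (h2 : KReach A k y z) :
    KReach A (k + 1) x z := by
  obtain ⟨n, hn, f, hf0, hfn, harc⟩ := h2
  refine ⟨n + 1, by omega, fun i => if i = 0 then x else f (i - 1), by simp, by simp [hfn], ?_⟩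
  intro i hi
  rcases Nat.eq_zero_or_pos i with h0 | h0
  · subst h0; simpa [hf0] using h
  · have h1 : ¬ (i = 0) := by omega
    have h2 : ¬ (i + 1 = 0) := by omega
    simp only [if_neg h1, if_neg h2]
    have h3 : i - 1 < n := by omega
    have h4 := harc (i - 1) h3
    have he : i - 1 + 1 = i := by omega
    rwa [he] at h4

variable {ι W : Type*} {AT : ι → ι → Prop} {AQ : W → W → Prop} {π : W → ι}

lemma proj_walk (hcomp : IsComposition AT AQ π) :
    ∀ (n : ℕ) (x y : W), (∃ f : ℕ → W, f 0 = x ∧ f n = y ∧ ∀ i < n, AQ (f i) (f (i + 1))) →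
      KReach AT n (π x) (π y) := by
  intro n
  induction n with
  | zero =>
    rintro x y ⟨f, h0, hn, -⟩
    rw [← h0, hn]
    exact kreach_refl _ _
  | succ n ih =>
    rintro x y ⟨f, h0, hn, harc⟩
    have hih : KReach AT n (π (f 1)) (π y) := by
      refine ih (f 1) y ⟨fun i => f (i + 1), rfl, hn, ?_⟩
      intro i hi
      exact harc (i + 1) (by omega)
    have harc0 : AQ x (f 1) := by rw [← h0]; exact harc 0 (by omega)
    by_cases hfib : π x = π (f 1)
    · rw [hfib]
      exact kreach_mono (by omega) hih
    · exact kreach_cons ((hcomp.cross x (f 1) hfib).mp harc0) hih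

lemma proj_kreach (hcomp : IsComposition AT AQ π) {k : ℕ} {x y : W}
    (h : KReach AQ k x y) : KReach AT k (π x) (π y) := by
  obtain ⟨n, hn, f, h0, hf, harc⟩ := h
  exact kreach_mono hn (proj_walk hcomp n x y ⟨f, h0, hf, harc⟩)

lemma lift_walk (hcomp : IsComposition AT AQ π) (hTirr : Irreflexive AT)
    {n : ℕ} (hn : 1 ≤ n) {x y : W} (f : ℕ → ι) (h0 : f 0 = π x) (hfn : f n = π y)
    (harc : ∀ i < n, AT (f i) (f (i + 1))) :
    ∃ g : ℕ → W, g 0 = x ∧ g n = y ∧ ∀ i < n, AQ (g i) (g (i + 1)) := by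
  classical
  set r : ι → W := Function.surjInv hcomp.surj with hrdef
  have hr : ∀ i, π (r i) = i := fun i => Function.surjInv_eq hcomp.surj i
  set g : ℕ → W := fun i => if i = 0 then x else if i = n then y else r (f i) with hgdef
  have hπ : ∀ j, π (g j) = f j := by
    intro j
    by_cases hj0 : j = 0
    · subst hj0; simp [hgdef, h0]
    · by_cases hjn : j = n
      · subst hjn
        simp only [hgdef]
        rw [if_neg hj0]
        simp [hfn]
      · simp [hgdef, hj0, hjn, hr]
  refine ⟨g, by simp [hgdef], by simp [hgdef, show ¬ (n = 0) by omega], ?_⟩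
  intro i hi
  have hAT : AT (f i) (f (i + 1)) := harc i hi
  have hne : f i ≠ f (i + 1) := by
    intro heq
    exact hTirr _ (heq ▸ hAT)
  have hπne : π (g i) ≠ π (g (i + 1)) := by rw [hπ, hπ]; exact hne
  refine (hcomp.cross _ _ hπne).mpr ?_
  rw [hπ, hπ]
  exact hAT

lemma short_cycle (hsemi : Semicomplete AT) (hirr : Irreflexive AT)
    (hstrong : Strong AT) (x : ι) (hx : ∃ y : ι, y ≠ x) :
    (∃ a, AT x a ∧ AT a x) ∨ ∃ p q, p ≠ q ∧ AT x p ∧ AT p q ∧ AT q x := by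
  classical
  obtain ⟨y, hy⟩ := hx
  -- get an out-neighbor y' of x
  obtain ⟨k, n, hn, f, h0, hfn, harc⟩ := hstrong x y
  have hn1 : 1 ≤ n := by
    rcases Nat.eq_zero_or_pos n with h | h
    · exfalso; apply hy; rw [← hfn, h, h0]
    · exact h
  set y' := f 1 with hy'
  have hxy' : AT x y' := by rw [← h0]; exact harc 0 (by omega)
  have hy'x : y' ≠ x := fun heq => hirr x (heq ▸ hxy')
  -- walk from y' back to x
  obtain ⟨k', m, hm, g, hg0, hgm, garc⟩ := hstrong y' x
  have hm1 : 1 ≤ m := by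
    rcases Nat.eq_zero_or_pos m with h | h
    · exfalso; apply hy'x; rw [← hg0, ← hgm, h]
    · exact h
  have hPex : ∃ j, j < m ∧ AT (g j) x := by
    refine ⟨m - 1, by omega, ?_⟩
    have := garc (m - 1) (by omega)
    rwa [show m - 1 + 1 = m by omega, hgm] at this
  obtain ⟨hjm, hjAT⟩ := Nat.find_spec hPex
  rcases Nat.eq_zero_or_pos (Nat.find hPex) with hj0 | hj0
  · left
    refine ⟨g 0, ?_, ?_⟩
    · rw [hg0]; exact hxy'
    · rwa [hj0] at hjAT
  · have hmin : ¬ (Nat.find hPex - 1 < m ∧ AT (g (Nat.find hPex - 1)) x) :=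
      Nat.find_min hPex (by omega)
    set j := Nat.find hPex with hjdef
    set j' := j - 1 with hj'def
    have hjj : j = j' + 1 := by omega
    have hj'm : j' < m := by omega
    have hnAT : ¬ AT (g j') x := fun h => hmin ⟨hj'm, h⟩
    have harcj : AT (g j') (g j) := by
      have := garc j' hj'm
      rwa [← hjj] at this
    by_cases hpx : g j' = x
    · left
      exact ⟨g j, hpx ▸ harcj, hjAT⟩
    · have hxp : AT x (g j') := by
        rcases hsemi x (g j') (fun h => hpx h.symm) with h | h
        · exact h
        · exact absurd h hnAT
      right
      refine ⟨g j', g j, ?_, hxp, harcj, hjAT⟩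
      intro heq
      exact hnAT (heq ▸ hjAT)

lemma exists_2king [Fintype ι] (hsemi : Semicomplete AT) (hirr : Irreflexive AT)
    [Nonempty ι] : ∃ x : ι, ∀ y, KReach AT 2 x y := by
  classical
  obtain ⟨x, -, hx⟩ := Finset.exists_max_image Finset.univ
    (fun z => (Finset.univ.filter (fun w => AT z w)).card) ⟨Classical.arbitrary ι, Finset.mem_univ _⟩
  refine ⟨x, fun y => ?_⟩
  by_cases hxy : y = x
  · subst hxy; exact kreach_refl _ _
  by_contra hnr
  have hnxy : ¬ AT x y := fun h => hnr (kreach_mono (by omega) (kreach_arc h))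
  have h2 : ∀ z, AT x z → ¬ AT z y :=
    fun z hz hzy => hnr (kreach_cons hz (kreach_arc hzy))
  have hyx : AT y x := by
    rcases hsemi x y (fun h => hxy h.symm) with h | h
    · exact absurd h hnxy
    · exact h
  have hsub : Finset.univ.filter (fun w => AT x w) ⊂ Finset.univ.filter (fun w => AT y w) := by
    constructor
    · intro z hz
      simp only [Finset.mem_filter, Finset.mem_univ, true_and] at hz ⊢
      have hzy : z ≠ y := fun h => hnxy (h ▸ hz)
      rcases hsemi y z (fun h => hzy h.symm) with h | h
      · exact h
      · exact absurd h (h2 z hz)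
    · intro hsub'
      have hxmem : x ∈ Finset.univ.filter (fun w => AT y w) := by
        simp only [Finset.mem_filter, Finset.mem_univ, true_and]; exact hyx
      have := hsub' hxmem
      simp only [Finset.mem_filter, Finset.mem_univ, true_and] at this
      exact hirr x this
  have hlt := Finset.card_lt_card hsub
  have := hx y (Finset.mem_univ y)
  omega

end Helpers

/-- In a strong semicomplete composition, `v ∈ V(H_i)` is a 3-king of `Q` iff `u_i`
is a 3-king of `T`; in particular `Q` has a 3-king. -/
theorem stmt7 {ι W : Type*} [Fintype ι] [Fintype W]
    (AT : ι → ι → Prop) (AQ : W → W → Prop) (π : W → ι)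
    (hcard : 2 ≤ Fintype.card ι)
    (hTirr : Irreflexive AT) (hQirr : Irreflexive AQ)
    (hsemi : Semicomplete AT) (hcomp : IsComposition AT AQ π)
    (hstrong : Strong AQ) :
    (∀ v : W, IsKKing AQ 3 v ↔ IsKKing AT 3 (π v)) ∧ ∃ v : W, IsKKing AQ 3 v := by
  classical
  have hTstrong : Strong AT := by
    intro i j
    obtain ⟨x, hx⟩ := hcomp.surj i
    obtain ⟨y, hy⟩ := hcomp.surj j
    obtain ⟨k, hk⟩ := hstrong x y
    exact ⟨k, by rw [← hx, ← hy]; exact proj_kreach hcomp hk⟩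
  have r : ι → W := Function.surjInv hcomp.surj
  have key : ∀ v : W, IsKKing AQ 3 v ↔ IsKKing AT 3 (π v) := by
    intro v
    constructor
    · intro hv i
      obtain ⟨y, hy⟩ := hcomp.surj i
      have := proj_kreach hcomp (hv y)
      rwa [hy] at this
    · intro hv y
      by_cases hvy : y = v
      · subst hvy; exact kreach_refl _ _
      by_cases hfib : π y = π v
      · -- same fiber: use a short cycle through π v in T
        have hex : ∃ j : ι, j ≠ π v := Fintype.exists_ne_of_one_lt_card (by omega) (π v)
        have hrπ : ∀ i, π (Function.surjInv hcomp.surj i) = i :=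
          fun i => Function.surjInv_eq hcomp.surj i
        rcases short_cycle hsemi hTirr hTstrong (π v) hex with ⟨a, h1, h2⟩ | ⟨p, q, hpq, h1, h2, h3⟩
        · set w := Function.surjInv hcomp.surj a with hwdef
          have hvw : AQ v w := by
            refine (hcomp.cross v w ?_).mpr ?_
            · rw [hrπ]; exact fun h => hTirr _ (h ▸ h1)
            · rw [hrπ]; exact h1
          have hwy : AQ w y := by
            refine (hcomp.cross w y ?_).mpr ?_
            · rw [hrπ, hfib]; exact fun h => hTirr _ (h ▸ h2)
            · rw [hrπ, hfib]; exact h2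
          exact kreach_mono (by omega) (kreach_cons hvw (kreach_arc hwy))
        · set w1 := Function.surjInv hcomp.surj p
          set w2 := Function.surjInv hcomp.surj q
          have hvw1 : AQ v w1 := by
            refine (hcomp.cross v w1 ?_).mpr ?_
            · rw [hrπ]; exact fun h => hTirr _ (h ▸ h1)
            · rw [hrπ]; exact h1
          have hw12 : AQ w1 w2 := by
            refine (hcomp.cross w1 w2 ?_).mpr ?_
            · rw [hrπ, hrπ]; exact hpq
            · rw [hrπ, hrπ]; exact h2
          have hw2y : AQ w2 y := by
            refine (hcomp.cross w2 y ?_).mpr ?_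
            · rw [hrπ, hfib]; exact fun h => hTirr _ (h ▸ h3)
            · rw [hrπ, hfib]; exact h3
          exact kreach_cons hvw1 (kreach_cons hw12 (kreach_arc hw2y))
      · -- different fibers: lift a T-walk
        obtain ⟨n, hn, f, h0, hfn, harc⟩ := hv (π y)
        have hn1 : 1 ≤ n := by
          rcases Nat.eq_zero_or_pos n with h | h
          · exfalso; apply hfib; rw [← hfn, h, h0]
          · exact h
        obtain ⟨g, hg0, hgn, garc⟩ :=
          lift_walk hcomp hTirr hn1 f h0 hfn harc
        exact ⟨n, hn, g, hg0, hgn, garc⟩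
  refine ⟨key, ?_⟩
  have : Nonempty ι := Fintype.card_pos_iff.mp (by omega)
  obtain ⟨c, hc⟩ := exists_2king hsemi hTirr
  obtain ⟨v, hvc⟩ := hcomp.surj c
  refine ⟨v, (key v).mpr ?_⟩
  rw [hvc]
  exact fun y => kreach_mono (by omega) (hc y)
end

section
/- Let Q = T[H_1, ..., H_t] be a semicomplete composition having a 3-king. If T has no source (vertex of in-degree 0), then Q has at least two 3-kings. -/
/-- A semicomplete composition with a 3-king whose outer digraph has no source
has at least two 3-kings. -/
theorem stmt8 {ι W : Type*} [Fintype ι] [Fintype W]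
    (AT : ι → ι → Prop) (AQ : W → W → Prop) (π : W → ι)
    (hcard : 2 ≤ Fintype.card ι)
    (hTirr : Irreflexive AT) (hQirr : Irreflexive AQ)
    (hsemi : Semicomplete AT) (hcomp : IsComposition AT AQ π)
    (hking : ∃ v : W, IsKKing AQ 3 v)
    (hnosource : ∀ i : ι, ∃ j : ι, AT j i) :
    ∃ x y : W, x ≠ y ∧ IsKKing AQ 3 x ∧ IsKKing AQ 3 y := by
  obtain ⟨v, hv⟩ := hking
  obtain ⟨j, hj⟩ := hnosource (π v)
  obtain ⟨w, hw⟩ := hcomp.surj j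
  have hwv : π w ≠ π v := by
    rw [hw]; intro h; exact hTirr (π v) (h ▸ hj)
  have hQwv : AQ w v := by
    rw [hcomp.cross w v hwv, hw]; exact hj
  by_cases hcase : ∀ z : W, π z ≠ π v → KReach AQ 2 v z
  · refine ⟨v, w, fun h => hwv (by rw [h]), hv, fun z => ?_⟩
    by_cases hz : π z = π v
    · have haz : AQ w z := by
        rw [hcomp.cross w z (by rw [hz]; exact hwv), hw, hz]; exact hj
      refine ⟨1, by norm_num, fun i => if i = 0 then w else z, by simp, by simp, ?_⟩
      intro i hi
      interval_cases i
      simpa using haz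
    · obtain ⟨n, hn, f, hf0, hfn, harc⟩ := hcase z hz
      refine ⟨n + 1, by omega, fun i => if i = 0 then w else f (i - 1), by simp,
        by simp [hfn], ?_⟩
      intro i hi
      rcases Nat.eq_zero_or_pos i with h0 | h0
      · subst h0; simpa [hf0] using hQwv
      · have h1 : i ≠ 0 := by omega
        have h2 : i + 1 ≠ 0 := by omega
        simp only [if_neg h1, if_neg h2]
        have h3 := harc (i - 1) (by omega)
        have h4 : i - 1 + 1 = i := by omega
        have h5 : i + 1 - 1 = i := by omega
        rw [h4] at h3; rw [h5]; exact h3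
  · push_neg at hcase
    obtain ⟨y, hyp, hy2⟩ := hcase
    have hnvy : ¬ AQ v y := by
      intro h
      exact hy2 ⟨1, by norm_num, fun i => if i = 0 then v else y, by simp, by simp, by
        intro i hi; interval_cases i; simpa using h⟩
    have hnip : ¬ AT (π v) (π y) := by
      intro h
      exact hnvy ((hcomp.cross v y (Ne.symm hyp)).mpr h)
    have hpi : AT (π y) (π v) := (hsemi (π y) (π v) hyp).resolve_right hnip
    have hQyv : AQ y v := (hcomp.cross y v hyp).mpr hpi
    have hb : ∀ q : ι, AT (π v) q → AT (π y) q := by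
      intro q hq
      by_contra hnq
      have hqp : q ≠ π y := fun h => hnip (h ▸ hq)
      have hqi : q ≠ π v := fun h => hTirr (π v) (h ▸ hq)
      have h2 : AT q (π y) := (hsemi q (π y) hqp).resolve_right hnq
      obtain ⟨a, ha⟩ := hcomp.surj q
      have hva : AQ v a := by
        rw [hcomp.cross v a (by rw [ha]; exact Ne.symm hqi), ha]; exact hq
      have hay : AQ a y := by
        rw [hcomp.cross a y (by rw [ha]; exact hqp), ha]; exact h2
      exact hy2 ⟨2, le_refl 2, fun i => if i = 0 then v else if i = 1 then a else y,
        by simp, by simp, by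
          intro i hi; interval_cases i
          · simpa using hva
          · simpa using hay⟩
    refine ⟨v, y, fun h => hyp (by rw [← h]), hv, fun z => ?_⟩
    obtain ⟨n, hn, f, hf0, hfn, harc⟩ := hv z
    rcases Nat.eq_zero_or_pos n with h0 | h0
    · have hzv : z = v := by rw [← hfn, h0, hf0]
      refine ⟨1, by norm_num, fun i => if i = 0 then y else v, by simp, by simp [hzv], ?_⟩
      intro i hi; interval_cases i; simpa using hQyv
    · have harc0 : AQ v (f 1) := by
        have := harc 0 h0; rwa [hf0] at this
      have hQyf1 : AQ y (f 1) := by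
        by_cases h1 : π (f 1) = π v
        · exact (hcomp.cross y (f 1) (by rw [h1]; exact hyp)).mpr (by rw [h1]; exact hpi)
        · have hAT : AT (π v) (π (f 1)) :=
            (hcomp.cross v (f 1) (Ne.symm h1)).mp harc0
          have hAT2 := hb _ hAT
          have hne : π y ≠ π (f 1) := fun h => hnip (h ▸ hAT)
          exact (hcomp.cross y (f 1) hne).mpr hAT2
      have hn0 : n ≠ 0 := by omega
      refine ⟨n, hn, fun i => if i = 0 then y else f i, by simp, by simp [hn0, hfn], ?_⟩
      intro i hi
      rcases Nat.eq_zero_or_pos i with h0' | h0'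
      · subst h0'; simpa using hQyf1
      · have h1 : i ≠ 0 := by omega
        have h2 : i + 1 ≠ 0 := by omega
        simp only [if_neg h1, if_neg h2]
        exact harc i hi
end

section
/- Every strongly connected semicomplete composition Q = T[H_1, ..., H_t] has at least two 3-kings. -/
section Aux

variable {V : Type*} {A : V → V → Prop}

lemma kreach1 {x y : V} (h : A x y) : KReach A 3 x y := by
  refine ⟨1, by norm_num, fun m => if m = 0 then x else y, by simp, by simp, ?_⟩
  intro i hi
  interval_cases i
  simpa using h

lemma kreach2 {x z y : V} (h1 : A x z) (h2 : A z y) : KReach A 3 x y := by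
  refine ⟨2, by norm_num, fun m => if m = 0 then x else if m = 1 then z else y,
    by simp, by simp, ?_⟩
  intro i hi
  interval_cases i
  · simpa using h1
  · simpa using h2

lemma kreach3 {x a b y : V} (h1 : A x a) (h2 : A a b) (h3 : A b y) : KReach A 3 x y := by
  refine ⟨3, by norm_num,
    fun m => if m = 0 then x else if m = 1 then a else if m = 2 then b else y,
    by simp, by simp, ?_⟩
  intro i hi
  interval_cases i
  · simpa using h1
  · simpa using h2
  · simpa using h3

/-- A vertex of maximum out-degree in a finite semicomplete digraph is a 2-king. -/
lemma max_out_two_king [Finite V]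
    (hirr : Irreflexive A) (hsemi : Semicomplete A) {v : V}
    (hmax : ∀ w, outDeg A w ≤ outDeg A v) :
    ∀ y, y ≠ v → A v y ∨ ∃ z, A v z ∧ A z y := by
  intro y hy
  by_contra h
  push_neg at h
  obtain ⟨h1, h2⟩ := h
  have hyv : A y v := (hsemi v y (Ne.symm hy)).resolve_left h1
  have hsub : {z | A v z} ⊂ {z | A y z} := by
    constructor
    · intro z hz
      have hzy : z ≠ y := fun e => h1 (e ▸ hz)
      exact (hsemi z y hzy).resolve_left (h2 z hz)
    · intro hcon
      exact hirr v (hcon hyv)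
  have : outDeg A v < outDeg A y := Set.ncard_lt_ncard hsub (Set.toFinite _)
  exact absurd (hmax y) (by omega)

lemma last_arc {i j : V} (h : Relation.ReflTransGen A j i) :
    j = i ∨ ∃ a, A a i := by
  induction h with
  | refl => exact Or.inl rfl
  | tail _ h2 _ => exact Or.inr ⟨_, h2⟩

/-- Short return: from `i` one can go out and come back within 3 steps. -/
lemma short_return (hirr : Irreflexive A) (hsemi : Semicomplete A)
    (hT : ∀ a b, Relation.ReflTransGen A a b) {i j : V} (hij : i ≠ j) :
    (∃ q, A i q ∧ A q i) ∨ ∃ a b, A i a ∧ A a b ∧ A b i := by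
  have hp : ∃ p, A i p := by
    rcases (hT i j).cases_head with he | ⟨c, hc, _⟩
    · exact absurd he hij
    · exact ⟨c, hc⟩
  obtain ⟨p, hp⟩ := hp
  have key : ∀ q, Relation.ReflTransGen A q i → A i q →
      (∃ q, A i q ∧ A q i) ∨ ∃ a b, A i a ∧ A a b ∧ A b i := by
    intro q h
    induction h using Relation.ReflTransGen.head_induction_on with
    | refl => exact fun hii => absurd hii (hirr i)
    | head hqr hri ih =>
      rename_i q r
      intro hiq
      by_cases hri' : r = i
      · exact Or.inl ⟨q, hiq, hri' ▸ hqr⟩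
      · by_cases hir : A i r
        · exact ih hir
        · have hri2 : A r i := (hsemi i r (Ne.symm hri')).resolve_left hir
          exact Or.inr ⟨q, r, hiq, hqr, hri2⟩
  exact key p (hT p i) hp

/-- A strong semicomplete digraph on at least two vertices has two distinct 2-kings. -/
lemma two_kings {ι : Type*} [Fintype ι] {AT : ι → ι → Prop}
    (hcard : 2 ≤ Fintype.card ι) (hirr : Irreflexive AT) (hsemi : Semicomplete AT)
    (hT : ∀ a b, Relation.ReflTransGen AT a b) :
    ∃ u v : ι, u ≠ v ∧ (∀ y, y ≠ u → AT u y ∨ ∃ z, AT u z ∧ AT z y) ∧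
      (∀ y, y ≠ v → AT v y ∨ ∃ z, AT v z ∧ AT z y) := by
  have hne : Nonempty ι := Fintype.card_pos_iff.mp (by omega)
  obtain ⟨u, hu⟩ := Finite.exists_max (outDeg AT)
  have hku : ∀ y, y ≠ u → AT u y ∨ ∃ z, AT u z ∧ AT z y :=
    max_out_two_king hirr hsemi hu
  -- find an in-neighbor of u
  obtain ⟨j, hj⟩ := Fintype.exists_ne_of_one_lt_card (by omega) u
  obtain ⟨a, ha⟩ := (last_arc (hT j u)).resolve_left hj
  -- the induced subdigraph on in-neighbors of u
  let S := {w : ι // AT w u}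
  let AS : S → S → Prop := fun a b => AT a.1 b.1
  have hSne : Nonempty S := ⟨⟨a, ha⟩⟩
  have hSirr : Irreflexive AS := fun a => hirr a.1
  have hSsemi : Semicomplete AS := fun a b hab =>
    hsemi a.1 b.1 (fun e => hab (Subtype.ext e))
  obtain ⟨v', hv'⟩ := Finite.exists_max (outDeg AS)
  have hkS := max_out_two_king hSirr hSsemi hv'
  refine ⟨u, v'.1, fun e => hirr v'.1 (e ▸ v'.2), hku, ?_⟩
  intro y hy
  by_cases hyu : y = u
  · subst hyu; exact Or.inl v'.2
  · by_cases hyS : AT y u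
    · rcases hkS ⟨y, hyS⟩ (fun e => hy (congrArg Subtype.val e)) with h | ⟨z, hz1, hz2⟩
      · exact Or.inl h
      · exact Or.inr ⟨z.1, hz1, hz2⟩
    · have huy : AT u y := (hsemi y u hyu).resolve_left hyS
      exact Or.inr ⟨u, v'.2, huy⟩

end Aux

/-- Every strongly connected semicomplete composition has at least two 3-kings. -/
theorem stmt9 {ι W : Type*} [Fintype ι] [Fintype W]
    (AT : ι → ι → Prop) (AQ : W → W → Prop) (π : W → ι)
    (hcard : 2 ≤ Fintype.card ι)
    (hTirr : Irreflexive AT) (hQirr : Irreflexive AQ)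
    (hsemi : Semicomplete AT) (hcomp : IsComposition AT AQ π)
    (hstrong : Strong AQ) :
    ∃ x y : W, x ≠ y ∧ IsKKing AQ 3 x ∧ IsKKing AQ 3 y := by
  -- T inherits strong connectivity (as reflexive-transitive reachability)
  have hT : ∀ a b : ι, Relation.ReflTransGen AT a b := by
    intro a b
    obtain ⟨x, rfl⟩ := hcomp.surj a
    obtain ⟨y, rfl⟩ := hcomp.surj b
    obtain ⟨k, n, hn, f, hf0, hfn, hstep⟩ := hstrong x y
    have key : ∀ m, m ≤ n → Relation.ReflTransGen AT (π (f 0)) (π (f m)) := by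
      intro m
      induction m with
      | zero => exact fun _ => Relation.ReflTransGen.refl
      | succ m ih =>
        intro hm
        have h1 := ih (by omega)
        have h2 := hstep m (by omega)
        by_cases he : π (f m) = π (f (m + 1))
        · exact he ▸ h1
        · exact h1.tail ((hcomp.cross _ _ he).1 h2)
    have := key n le_rfl
    rwa [hf0, hfn] at this
  -- every vertex in the fiber of a 2-king of T is a 3-king of Q
  have king_of : ∀ i : ι, (∀ y, y ≠ i → AT i y ∨ ∃ z, AT i z ∧ AT z y) →
      ∀ x : W, π x = i → IsKKing AQ 3 x := by
    intro i hking x hx y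
    by_cases hji : π y = i
    · -- same fiber: use a short return cycle in T
      obtain ⟨j0, hj0⟩ := Fintype.exists_ne_of_one_lt_card (by omega) i
      rcases short_return hTirr hsemi hT (Ne.symm hj0) with ⟨q, hiq, hqi⟩ | ⟨a, b, hia, hab, hbi⟩
      · have hiq' : i ≠ q := fun e => hTirr q (e ▸ hiq)
        obtain ⟨z, hz⟩ := hcomp.surj q
        have h1 : AQ x z := (hcomp.cross x z (by rw [hx, hz]; exact hiq')).2
          (by rw [hx, hz]; exact hiq)
        have h2 : AQ z y := (hcomp.cross z y (by rw [hz, hji]; exact Ne.symm hiq')).2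
          (by rw [hz, hji]; exact hqi)
        exact kreach2 h1 h2
      · have hia' : i ≠ a := fun e => hTirr a (e ▸ hia)
        have hab' : a ≠ b := fun e => hTirr b (e ▸ hab)
        have hbi' : b ≠ i := fun e => hTirr i (e ▸ hbi)
        obtain ⟨za, hza⟩ := hcomp.surj a
        obtain ⟨zb, hzb⟩ := hcomp.surj b
        have h1 : AQ x za := (hcomp.cross x za (by rw [hx, hza]; exact hia')).2
          (by rw [hx, hza]; exact hia)
        have h2 : AQ za zb := (hcomp.cross za zb (by rw [hza, hzb]; exact hab')).2
          (by rw [hza, hzb]; exact hab)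
        have h3 : AQ zb y := (hcomp.cross zb y (by rw [hzb, hji]; exact hbi')).2
          (by rw [hzb, hji]; exact hbi)
        exact kreach3 h1 h2 h3
    · rcases hking (π y) hji with h | ⟨m, him, hmy⟩
      · exact kreach1 ((hcomp.cross x y (by rw [hx]; exact fun e => hji e.symm)).2
          (by rw [hx]; exact h))
      · have him' : i ≠ m := fun e => hTirr m (e ▸ him)
        have hmy' : m ≠ π y := fun e => hTirr (π y) (e ▸ hmy)
        obtain ⟨z, hz⟩ := hcomp.surj m
        have h1 : AQ x z := (hcomp.cross x z (by rw [hx, hz]; exact him')).2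
          (by rw [hx, hz]; exact him)
        have h2 : AQ z y := (hcomp.cross z y (by rw [hz]; exact hmy')).2
          (by rw [hz]; exact hmy)
        exact kreach2 h1 h2
  obtain ⟨u, v, huv, hku, hkv⟩ := two_kings hcard hTirr hsemi hT
  obtain ⟨x, hx⟩ := hcomp.surj u
  obtain ⟨y, hy⟩ := hcomp.surj v
  exact ⟨x, y, fun e => huv (hx ▸ hy ▸ congrArg π e : _), king_of u hku x hx,
    king_of v hkv y hy⟩
end

section
/- Let Q = T[H_1, ..., H_t] be a semicomplete composition such that T has no sink (vertex of out-degree 0). Then Q contains two disjoint quasi-kernels. -/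
lemma kreach_one {V : Type*} {A : V → V → Prop} {x y : V} (h : A x y) : KReach A 2 x y := by
  refine ⟨1, by norm_num, fun i => if i = 0 then x else y, by simp, by simp, ?_⟩
  intro i hi
  interval_cases i
  simpa using h

lemma kreach_two {V : Type*} {A : V → V → Prop} {x z y : V} (h1 : A x z) (h2 : A z y) :
    KReach A 2 x y := by
  refine ⟨2, le_refl _, fun i => if i = 0 then x else if i = 1 then z else y, by simp, by simp, ?_⟩
  intro i hi
  interval_cases i <;> simpa

lemma kreach_lift {V : Type*} {A : V → V → Prop} {P : V → Prop} {k : ℕ} {a b : {v // P v}}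
    (h : KReach (fun x y : {v // P v} => A x.1 y.1) k a b) : KReach A k a.1 b.1 := by
  obtain ⟨n, hn, f, h0, hn', harc⟩ := h
  exact ⟨n, hn, fun i => (f i).1, by simp [h0], by simp [hn'], fun i hi => harc i hi⟩

lemma qk_aux : ∀ (n : ℕ) (V : Type*) [Fintype V] (A : V → V → Prop),
    Fintype.card V ≤ n → ∃ K : Set V, QuasiKernel A K := by
  intro n
  induction n with
  | zero =>
    intro V _ A h
    have hE : IsEmpty V := Fintype.card_eq_zero_iff.mp (Nat.le_zero.mp h)
    exact ⟨∅, fun x hx => absurd hx (by simp), fun x _ => (hE.false x).elim⟩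
  | succ n ih =>
    intro V _ A h
    classical
    by_cases hV : Nonempty V
    · obtain ⟨v⟩ := hV
      set P : V → Prop := fun u => u ≠ v ∧ ¬ A u v with hP
      have hcard : Fintype.card {u // P u} ≤ n := by
        have := Fintype.card_subtype_lt (p := P) (x := v) (by simp [hP])
        omega
      obtain ⟨Q₁, hQind, hQabs⟩ := ih {u // P u} (fun a b => A a.1 b.1) hcard
      by_cases hvq : ∃ q ∈ Q₁, A v q.1
      · obtain ⟨q, hq, hAq⟩ := hvq
        refine ⟨Subtype.val '' Q₁, ?_, ?_⟩
        · rintro x ⟨a, ha, rfl⟩ y ⟨b, hb, rfl⟩ hxy harc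
          exact hQind a ha b hb (fun e => hxy (congrArg Subtype.val e)) harc
        · intro x hx
          by_cases hPx : P x
          · have hxQ : ⟨x, hPx⟩ ∉ Q₁ := fun hm => hx ⟨_, hm, rfl⟩
            obtain ⟨y, hy, hr⟩ := hQabs _ hxQ
            exact ⟨y.1, ⟨y, hy, rfl⟩, kreach_lift hr⟩
          · have : x = v ∨ A x v := by
              by_contra hc
              push_neg at hc
              exact hPx ⟨hc.1, hc.2⟩
            rcases this with rfl | hxv
            · exact ⟨q.1, ⟨q, hq, rfl⟩, kreach_one hAq⟩
            · exact ⟨q.1, ⟨q, hq, rfl⟩, kreach_two hxv hAq⟩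
      · push_neg at hvq
        refine ⟨insert v (Subtype.val '' Q₁), ?_, ?_⟩
        · rintro x (rfl | ⟨a, ha, rfl⟩) y (rfl | ⟨b, hb, rfl⟩) hxy harc
          · exact hxy rfl
          · exact hvq b hb harc
          · exact a.2.2 harc
          · exact hQind a ha b hb (fun e => hxy (congrArg Subtype.val e)) harc
        · intro x hx
          have hxv : x ≠ v := fun e => hx (by simp [e])
          by_cases hAxv : A x v
          · exact ⟨v, Or.inl rfl, kreach_one hAxv⟩
          · have hPx : P x := ⟨hxv, hAxv⟩
            have hxQ : ⟨x, hPx⟩ ∉ Q₁ := fun hm => hx (Or.inr ⟨_, hm, rfl⟩)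
            obtain ⟨y, hy, hr⟩ := hQabs _ hxQ
            exact ⟨y.1, Or.inr ⟨y, hy, rfl⟩, kreach_lift hr⟩
    · exact ⟨∅, fun x hx => absurd hx (by simp), fun x _ => absurd ⟨x⟩ hV⟩

lemma qk_exists {V : Type*} [Fintype V] (A : V → V → Prop) : ∃ K : Set V, QuasiKernel A K :=
  qk_aux (Fintype.card V) V A le_rfl

/-- In a semicomplete digraph, within any nonempty set `B`, there is a vertex `y`
such that every other vertex of `B` reaches `y` in at most 2 steps through `B`. -/
lemma max_indeg_absorbent {ι : Type*} [Fintype ι] (AT : ι → ι → Prop)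
    (hirr : Irreflexive AT) (hsemi : Semicomplete AT) (B : Finset ι) (hB : B.Nonempty) :
    ∃ y ∈ B, ∀ z ∈ B, z ≠ y → AT z y ∨ ∃ w ∈ B, AT z w ∧ AT w y := by
  classical
  obtain ⟨y, hyB, hmax⟩ := B.exists_max_image (fun u => (B.filter (fun w => AT w u)).card) hB
  refine ⟨y, hyB, ?_⟩
  intro z hzB hzy
  by_contra hc
  push_neg at hc
  obtain ⟨h1, h2⟩ := hc
  have hyz : AT y z := (hsemi z y hzy).resolve_left h1
  have hsub : insert y (B.filter (fun w => AT w y)) ⊆ B.filter (fun w => AT w z) := by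
    intro w hw
    rcases Finset.mem_insert.mp hw with rfl | hw
    · exact Finset.mem_filter.mpr ⟨hyB, hyz⟩
    · obtain ⟨hwB, hwy⟩ := Finset.mem_filter.mp hw
      have hwz : w ≠ z := fun e => h1 (e ▸ hwy)
      have : ¬ AT z w := fun h => h2 w hwB h hwy
      exact Finset.mem_filter.mpr ⟨hwB, (hsemi z w (Ne.symm hwz)).resolve_left this⟩
  have hnotmem : y ∉ B.filter (fun w => AT w y) := by
    simp only [Finset.mem_filter]
    exact fun h => hirr y h.2
  have : (B.filter (fun w => AT w y)).card + 1 ≤ (B.filter (fun w => AT w z)).card := by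
    calc (B.filter (fun w => AT w y)).card + 1
        = (insert y (B.filter (fun w => AT w y))).card := (Finset.card_insert_of_notMem hnotmem).symm
      _ ≤ _ := Finset.card_le_card hsub
  have := hmax z hzB
  omega

lemma two_absorbent {ι : Type*} [Fintype ι] (AT : ι → ι → Prop)
    (hirr : Irreflexive AT) (hsemi : Semicomplete AT) [Nonempty ι]
    (hnosink : ∀ i : ι, ∃ j : ι, AT i j) :
    ∃ x y : ι, x ≠ y ∧ SingletonAbsorbent AT 2 x ∧ SingletonAbsorbent AT 2 y := by
  classical
  obtain ⟨x, -, hx⟩ := max_indeg_absorbent AT hirr hsemi Finset.univ Finset.univ_nonempty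
  set B : Finset ι := Finset.univ.filter (fun w => AT x w) with hBdef
  have hBne : B.Nonempty := by
    obtain ⟨j, hj⟩ := hnosink x
    exact ⟨j, by simp [hBdef, hj]⟩
  obtain ⟨y, hyB, hy⟩ := max_indeg_absorbent AT hirr hsemi B hBne
  have hxy : AT x y := by simpa [hBdef] using hyB
  have hxney : x ≠ y := fun e => hirr x (e ▸ hxy)
  refine ⟨x, y, hxney, ?_, ?_⟩
  · intro z hz
    rcases hx z (Finset.mem_univ z) hz with h | ⟨w, -, hw1, hw2⟩
    · exact kreach_one h
    · exact kreach_two hw1 hw2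
  · intro z hz
    by_cases hzx : z = x
    · exact hzx ▸ kreach_one hxy
    by_cases hzB : z ∈ B
    · rcases hy z hzB hz with h | ⟨w, -, hw1, hw2⟩
      · exact kreach_one h
      · exact kreach_two hw1 hw2
    · have : ¬ AT x z := by simpa [hBdef] using hzB
      have hzx' : AT z x := (hsemi x z (Ne.symm hzx)).resolve_left this
      exact kreach_two hzx' hxy

lemma lift_fiber_qk {ι W : Type*} [Fintype W] (AT : ι → ι → Prop) (AQ : W → W → Prop)
    (π : W → ι) (hTirr : Irreflexive AT) (hcomp : IsComposition AT AQ π) (i : ι)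
    (habs : SingletonAbsorbent AT 2 i) :
    ∃ K : Set W, QuasiKernel AQ K ∧ (∀ w ∈ K, π w = i) := by
  classical
  obtain ⟨K₀, hInd, hAbs⟩ := qk_exists (FiberArc AQ π i)
  have hKne : ∃ a, a ∈ K₀ := by
    obtain ⟨w₀, hw₀⟩ := hcomp.surj i
    by_cases h : (⟨w₀, hw₀⟩ : {w // π w = i}) ∈ K₀
    · exact ⟨_, h⟩
    · obtain ⟨y, hy, -⟩ := hAbs _ h
      exact ⟨y, hy⟩
  obtain ⟨y₀, hy₀⟩ := hKne
  refine ⟨Subtype.val '' K₀, ⟨?_, ?_⟩, ?_⟩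
  · rintro x ⟨a, ha, rfl⟩ y ⟨b, hb, rfl⟩ hxy harc
    exact hInd a ha b hb (fun e => hxy (congrArg Subtype.val e)) harc
  · intro w hw
    by_cases hwi : π w = i
    · have hwK : (⟨w, hwi⟩ : {w // π w = i}) ∉ K₀ := fun hm => hw ⟨_, hm, rfl⟩
      obtain ⟨y, hy, hr⟩ := hAbs _ hwK
      exact ⟨y.1, ⟨y, hy, rfl⟩, kreach_lift hr⟩
    · have hcross1 : ∀ (u : W), AT (π w) i → π u = i → AQ w u := by
        intro u h hu
        exact (hcomp.cross w u (by rw [hu]; exact hwi)).mpr (by rwa [hu])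
      obtain ⟨n, hn, g, hg0, hgn, hgarc⟩ := habs (π w) hwi
      have hn0 : n ≠ 0 := fun e => hwi (by rw [← hg0, ← hgn, e])
      have key : ∃ y ∈ Subtype.val '' K₀, KReach AQ 2 w y := by
        interval_cases n
        · exact absurd rfl hn0
        · have h1 : AT (π w) i := by have h := hgarc 0 (by norm_num); rw [hg0] at h; simpa [hgn] using h
          exact ⟨y₀.1, ⟨y₀, hy₀, rfl⟩, kreach_one (hcross1 y₀.1 h1 y₀.2)⟩
        · have h1 : AT (π w) (g 1) := by have h := hgarc 0 (by norm_num); rw [hg0] at h; simpa using h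
          have h2 : AT (g 1) i := by have h := hgarc 1 (by norm_num); simpa [hgn] using h
          by_cases hgi : g 1 = i
          · exact ⟨y₀.1, ⟨y₀, hy₀, rfl⟩, kreach_one (hcross1 y₀.1 (hgi ▸ h1) y₀.2)⟩
          · obtain ⟨z, hz⟩ := hcomp.surj (g 1)
            have hwz : AQ w z := (hcomp.cross w z (by rw [hz]; exact fun e => hTirr _ (e ▸ h1))).mpr (by rwa [hz])
            have hzy : AQ z y₀.1 :=
              (hcomp.cross z y₀.1 (by rw [hz, y₀.2]; exact hgi)).mpr (by rw [hz, y₀.2]; exact h2)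
            exact ⟨y₀.1, ⟨y₀, hy₀, rfl⟩, kreach_two hwz hzy⟩
      exact key
  · rintro w ⟨a, ha, rfl⟩
    exact a.2

/-- A semicomplete composition whose outer digraph has no sink contains a pair of
disjoint quasi-kernels. -/
theorem stmt16 {ι W : Type*} [Fintype ι] [Fintype W]
    (AT : ι → ι → Prop) (AQ : W → W → Prop) (π : W → ι)
    (hcard : 2 ≤ Fintype.card ι)
    (hTirr : Irreflexive AT) (hQirr : Irreflexive AQ)
    (hsemi : Semicomplete AT) (hcomp : IsComposition AT AQ π)
    (hnosink : ∀ i : ι, ∃ j : ι, AT i j) :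
    ∃ K₁ K₂ : Set W, QuasiKernel AQ K₁ ∧ QuasiKernel AQ K₂ ∧ Disjoint K₁ K₂ := by
  have : Nonempty ι := Fintype.card_pos_iff.mp (by omega)
  obtain ⟨x, y, hxy, hax, hay⟩ := two_absorbent AT hTirr hsemi hnosink
  obtain ⟨K₁, hK₁, hK₁f⟩ := lift_fiber_qk AT AQ π hTirr hcomp x hax
  obtain ⟨K₂, hK₂, hK₂f⟩ := lift_fiber_qk AT AQ π hTirr hcomp y hay
  refine ⟨K₁, K₂, hK₁, hK₂, Set.disjoint_left.mpr ?_⟩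
  intro w hw1 hw2
  exact hxy ((hK₁f w hw1) ▸ (hK₂f w hw2) ▸ rfl)
end

section
/- Let Q = T[H_1, ..., H_t] be a semicomplete composition and k ≥ 3. If Q contains a k-kernel, then there is a vertex v ∈ V(Q), say v ∈ V(H_i), such that {v} is a (k-1)-absorbent set of the digraph Q − (V(H_i) \ {v}). -/
/-- If a semicomplete composition has a `k`-kernel (`k ≥ 3`), then there is a vertex
`v ∈ V(H_i)` such that `{v}` is `(k-1)`-absorbent in `Q − (V(H_i) \ {v})`. -/
theorem stmt17 {ι W : Type*} [Fintype ι] [Fintype W] (k : ℕ) (hk : 3 ≤ k)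
    (AT : ι → ι → Prop) (AQ : W → W → Prop) (π : W → ι)
    (hcard : 2 ≤ Fintype.card ι)
    (hTirr : Irreflexive AT) (hQirr : Irreflexive AQ)
    (hsemi : Semicomplete AT) (hcomp : IsComposition AT AQ π)
    (hker : ∃ K : Set W, KKernel AQ k K) :
    ∃ v : W, SingletonAbsorbent
      (DelArc AQ (fun w => π w = π v → w = v)) (k - 1)
      ⟨v, fun _ => rfl⟩ := by
  classical
  obtain ⟨K, hind, habs⟩ := hker
  -- W is nonempty
  have hιne : Nonempty ι := Fintype.card_pos_iff.mp (by omega)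
  obtain ⟨i0⟩ := hιne
  obtain ⟨w0, -⟩ := hcomp.surj i0
  -- K is nonempty
  have hKne : ∃ v, v ∈ K := by
    by_cases h : w0 ∈ K
    · exact ⟨w0, h⟩
    · obtain ⟨y, hy, -⟩ := habs w0 h; exact ⟨y, hy⟩
  obtain ⟨v, hv⟩ := hKne
  -- all of K is in the fiber of v
  have hfiber : ∀ y ∈ K, π y = π v := by
    intro y hy
    by_contra hne
    rcases hsemi (π y) (π v) hne with h | h
    · have harc : AQ y v := (hcomp.cross y v hne).2 h
      have hyv : y ≠ v := by rintro rfl; exact hne rfl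
      exact hind y hy v hv hyv ⟨1, by omega, fun j => if j = 0 then y else v,
        by simp, by simp, by intro j hj; interval_cases j; simpa⟩
    · have harc : AQ v y := (hcomp.cross v y (Ne.symm hne)).2 h
      have hyv : v ≠ y := by rintro rfl; exact hne rfl
      exact hind v hv y hy hyv ⟨1, by omega, fun j => if j = 0 then v else y,
        by simp, by simp, by intro j hj; interval_cases j; simpa⟩
  refine ⟨v, ?_⟩
  rintro ⟨x, hx⟩ hxne
  have hxv : x ≠ v := fun h => hxne (Subtype.ext h)
  have hπx : π x ≠ π v := fun h => hxv (hx h)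
  -- x ∉ K since x is not in the fiber
  have hxK : x ∉ K := fun h => hπx (hfiber x h)
  obtain ⟨y, hyK, n, hn, f, hf0, hfn, hstep⟩ := habs x hxK
  have hyfib : π y = π v := hfiber y hyK
  -- least index entering the fiber
  have hex : ∃ m, π (f m) = π v := ⟨n, by rw [hfn]; exact hyfib⟩
  set m := Nat.find hex with hm
  have hmspec : π (f m) = π v := Nat.find_spec hex
  have hmlt : ∀ i < m, π (f i) ≠ π v := fun i hi => Nat.find_min hex hi
  have hmn : m ≤ n := Nat.find_min' hex (by rw [hfn]; exact hyfib)
  have hm1 : 1 ≤ m := by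
    rcases Nat.eq_zero_or_pos m with h | h
    · exfalso; apply hπx; rw [← hf0]; rw [h] at hmspec; exact hmspec
    · exact h
  refine ⟨m, by omega, fun j => if h : j < m then ⟨f j, fun hp => absurd hp (hmlt j h)⟩
    else ⟨v, fun _ => rfl⟩, ?_, ?_, ?_⟩
  · simp only [dif_pos (by omega : 0 < m)]; exact Subtype.ext hf0
  · simp
  · intro j hj
    have hjn : j < n := lt_of_lt_of_le hj hmn
    have harc : AQ (f j) (f (j + 1)) := hstep j hjn
    simp only [DelArc, dif_pos hj]
    rcases Nat.lt_or_ge (j + 1) m with h | h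
    · simpa [dif_pos h] using harc
    · have hjm : j + 1 = m := by omega
      rw [dif_neg (by omega : ¬ j + 1 < m)]
      have h1 : π (f j) ≠ π (f (j + 1)) := by rw [hjm, hmspec]; exact hmlt j hj
      have hT : AT (π (f j)) (π (f (j + 1))) := (hcomp.cross _ _ h1).1 harc
      have h2 : π (f j) ≠ π v := hmlt j hj
      refine (hcomp.cross (f j) v h2).2 ?_
      rw [← hmspec, ← hjm]
      exact hT
end
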